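/- Let c̄(γ) = (1/γ - γ) erf(γ/√2) - √(2/π) e^{-γ²/2} + γ for γ > 0. Then c̄ is bounded on (0, ∞); in particular c̄(γ) ≤ 1 for all γ > 0. -/

import Mathlib

open MeasureTheory Real Set

lemma aux_xexp_int (t : ℝ) :
    ∫ x in Set.Ioi t, x * Real.exp (-x^2) = Real.exp (-t^2) / 2 := by
  have hderiv : ∀ x ∈ Set.Ici t,
      HasDerivAt (fun x : ℝ => -Real.exp (-x^2) / 2) (x * Real.exp (-x^2)) x := by
    intro x _
    have h1 : HasDerivAt (fun x : ℝ => -x^2) (-(2*x)) x := by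
      simpa using ((hasDerivAt_pow 2 x).fun_neg)
    have h2 := (h1.exp).fun_neg.div_const 2
    rw [show x * Real.exp (-x^2) = -(Real.exp (-x^2) * -(2 * x)) / 2 by ring]
    exact h2
  have hint : IntegrableOn (fun x : ℝ => x * Real.exp (-x^2)) (Set.Ioi t) := by
    have := (integrable_mul_exp_neg_mul_sq (b := 1) one_pos).integrableOn (s := Set.Ioi t)
    simpa using this
  have htend : Filter.Tendsto (fun x : ℝ => -Real.exp (-x^2) / 2) Filter.atTop (nhds 0) := by
    have h1 : Filter.Tendsto (fun x : ℝ => -x^2) Filter.atTop Filter.atBot := by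
      simpa using (tendsto_pow_atTop (n := 2) (by norm_num)).neg_const_mul_atTop
        (r := (-1:ℝ)) (by norm_num) |>.congr (fun x => by ring)
    have := ((Real.tendsto_exp_atBot.comp h1).neg).div_const 2
    simpa using this
  have := MeasureTheory.integral_Ioi_of_hasDerivAt_of_tendsto' hderiv hint htend
  rw [this]; ring

theorem stmt_14
    (erf : ℝ → ℝ)
    (herf : ∀ y : ℝ, erf y = (2 / Real.sqrt Real.pi) * ∫ s in (0:ℝ)..y, Real.exp (-s^2))
    (cbar : ℝ → ℝ)
    (hc : ∀ γ : ℝ, 0 < γ → cbar γ =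
      (1/γ - γ) * erf (γ / Real.sqrt 2)
      - Real.sqrt (2 / Real.pi) * Real.exp (-γ^2 / 2) + γ) :
    (∃ M : ℝ, ∀ γ : ℝ, 0 < γ → |cbar γ| ≤ M) ∧
    (∀ γ : ℝ, 0 < γ → cbar γ ≤ 1) := by
  have sqrtpi_pos : (0:ℝ) < Real.sqrt Real.pi := Real.sqrt_pos.mpr Real.pi_pos
  have sqrt2_pos : (0:ℝ) < Real.sqrt 2 := by positivity
  have sq_sqrtpi : Real.sqrt Real.pi ^ 2 = Real.pi := Real.sq_sqrt Real.pi_pos.le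
  have sq_sqrt2 : Real.sqrt 2 ^ 2 = 2 := Real.sq_sqrt (by norm_num)
  have hsqrt_div : Real.sqrt (2 / Real.pi) = Real.sqrt 2 / Real.sqrt Real.pi := by
    rw [Real.sqrt_div' 2 Real.pi_pos.le] <;> simp [Real.sqrt_div]
  have key : ∀ γ : ℝ, 0 < γ → cbar γ ≤ 1 ∧ -1 ≤ cbar γ := by
    intro γ hγ
    set t : ℝ := γ / Real.sqrt 2 with ht_def
    have ht : 0 < t := by positivity
    have hγt : γ = Real.sqrt 2 * t := by rw [ht_def]; field_simp
    have ht2 : t^2 = γ^2 / 2 := by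
      rw [ht_def, div_pow, sq_sqrt2]
    set E : ℝ := ∫ s in (0:ℝ)..t, Real.exp (-s^2) with hE_def
    set e : ℝ := Real.exp (-t^2) with he_def
    have he_pos : 0 < e := Real.exp_pos _
    have he_le : e ≤ 1 := Real.exp_le_one_iff.mpr (by nlinarith)
    -- E as Ioc integral
    have hE_Ioc : E = ∫ s in Set.Ioc (0:ℝ) t, Real.exp (-s^2) := by
      rw [hE_def, intervalIntegral.integral_of_le ht.le]
    have hint : Integrable (fun s : ℝ => Real.exp (-s^2)) := by
      have := integrable_exp_neg_mul_sq (b := (1:ℝ)) one_pos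
      simpa using this
    -- splitting
    have hgauss : ∫ s in Set.Ioi (0:ℝ), Real.exp (-s^2) = Real.sqrt Real.pi / 2 := by
      have := integral_gaussian_Ioi 1
      simpa using this
    have hsplit : Real.sqrt Real.pi / 2 - E = ∫ s in Set.Ioi t, Real.exp (-s^2) := by
      rw [← hgauss, hE_Ioc]
      rw [← Set.Ioc_union_Ioi_eq_Ioi ht.le,
        MeasureTheory.setIntegral_union (Set.Ioc_disjoint_Ioi le_rfl) measurableSet_Ioi
          hint.integrableOn hint.integrableOn]
      ring
    -- tail bound
    have htail : ∫ s in Set.Ioi t, Real.exp (-s^2) ≤ e / (2*t) := by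
      have hmono : ∫ s in Set.Ioi t, Real.exp (-s^2)
          ≤ ∫ s in Set.Ioi t, s * Real.exp (-s^2) / t := by
        apply MeasureTheory.setIntegral_mono_on hint.integrableOn
        · have : IntegrableOn (fun s : ℝ => s * Real.exp (-s^2)) (Set.Ioi t) := by
            have := (integrable_mul_exp_neg_mul_sq (b := 1) one_pos).integrableOn
              (s := Set.Ioi t)
            simpa using this
          exact this.div_const t
        · exact measurableSet_Ioi
        · intro x hx
          rw [Set.mem_Ioi] at hx
          rw [le_div_iff₀ ht]
          have hx0 : 0 < x := ht.trans hx
          nlinarith [Real.exp_pos (-x^2)]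
      have heq : ∫ s in Set.Ioi t, s * Real.exp (-s^2) / t = e / (2*t) := by
        rw [MeasureTheory.integral_div, aux_xexp_int t, he_def]
        field_simp
      linarith [hmono, heq.le, heq.ge]
    have hE_nonneg : 0 ≤ E := by
      rw [hE_def]
      apply intervalIntegral.integral_nonneg ht.le
      intro x _; positivity
    have hE_le_t : E ≤ t := by
      rw [hE_def]
      calc ∫ s in (0:ℝ)..t, Real.exp (-s^2) ≤ ∫ _ in (0:ℝ)..t, (1:ℝ) := by
            apply intervalIntegral.integral_mono_on ht.le
              (hint.intervalIntegrable) intervalIntegrable_const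
            intro x _
            exact Real.exp_le_one_iff.mpr (by nlinarith)
        _ = t := by simp
    have hE_le_half : E ≤ Real.sqrt Real.pi / 2 := by
      have h0 : 0 ≤ ∫ s in Set.Ioi t, Real.exp (-s^2) :=
        MeasureTheory.setIntegral_nonneg measurableSet_Ioi (fun x _ => (Real.exp_pos _).le)
      linarith [hsplit ▸ h0]
    have htail' : Real.sqrt Real.pi / 2 - E ≤ e / (2*t) := hsplit ▸ htail
    clear_value t E e
    -- rewrite cbar
    have hcγ : cbar γ = (1/γ - γ) * ((2 / Real.sqrt Real.pi) * E)
        - (Real.sqrt 2 / Real.sqrt Real.pi) * e + γ := by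
      rw [hc γ hγ, herf, ← ht_def, ← hE_def, hsqrt_div, he_def, ht2]
      ring_nf
    constructor
    · -- upper bound
      have k1 : (1/γ) * ((2 / Real.sqrt Real.pi) * E) ≤ Real.sqrt 2 / Real.sqrt Real.pi := by
        rw [hγt]
        have h1 : (1/(Real.sqrt 2 * t)) * ((2 / Real.sqrt Real.pi) * E)
            ≤ (1/(Real.sqrt 2 * t)) * ((2 / Real.sqrt Real.pi) * t) := by
          apply mul_le_mul_of_nonneg_left _ (by positivity)
          apply mul_le_mul_of_nonneg_left hE_le_t (by positivity)
        calc (1/(Real.sqrt 2 * t)) * ((2 / Real.sqrt Real.pi) * E)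
            ≤ (1/(Real.sqrt 2 * t)) * ((2 / Real.sqrt Real.pi) * t) := h1
          _ = 2 / (Real.sqrt 2 * Real.sqrt Real.pi) := by
              field_simp
          _ = Real.sqrt 2 / Real.sqrt Real.pi := by
              have h2 : Real.sqrt 2 * Real.sqrt 2 = 2 := Real.mul_self_sqrt (by norm_num)
              rw [div_eq_div_iff (by positivity) sqrtpi_pos.ne']
              linear_combination -Real.sqrt Real.pi * sq_sqrt2
      have k2 : γ - γ * ((2 / Real.sqrt Real.pi) * E) ≤ (Real.sqrt 2 / Real.sqrt Real.pi) * e := by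
        have h1 : γ - γ * ((2 / Real.sqrt Real.pi) * E)
            = γ * (2 / Real.sqrt Real.pi) * (Real.sqrt Real.pi / 2 - E) := by
          field_simp
        rw [h1, hγt]
        calc Real.sqrt 2 * t * (2 / Real.sqrt Real.pi) * (Real.sqrt Real.pi / 2 - E)
            ≤ Real.sqrt 2 * t * (2 / Real.sqrt Real.pi) * (e / (2*t)) := by
              apply mul_le_mul_of_nonneg_left htail' (by positivity)
          _ = (Real.sqrt 2 / Real.sqrt Real.pi) * e := by
              field_simp
      have hsle1 : Real.sqrt 2 / Real.sqrt Real.pi ≤ 1 := by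
        rw [div_le_one sqrtpi_pos]
        apply Real.sqrt_le_sqrt
        linarith [Real.pi_gt_three]
      have : cbar γ ≤ Real.sqrt 2 / Real.sqrt Real.pi := by
        rw [hcγ]
        have expand : (1/γ - γ) * ((2 / Real.sqrt Real.pi) * E)
            - (Real.sqrt 2 / Real.sqrt Real.pi) * e + γ
            = (1/γ) * ((2 / Real.sqrt Real.pi) * E)
              + ((γ - γ * ((2 / Real.sqrt Real.pi) * E)) - (Real.sqrt 2 / Real.sqrt Real.pi) * e) := by
          ring
        rw [expand]
        linarith
      linarith
    · -- lower bound
      have k3 : 0 ≤ (1/γ) * ((2 / Real.sqrt Real.pi) * E) := by positivity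
      have k4 : 0 ≤ γ - γ * ((2 / Real.sqrt Real.pi) * E) := by
        have : (2 / Real.sqrt Real.pi) * E ≤ 1 := by
          rw [div_mul_eq_mul_div, div_le_one sqrtpi_pos]
          linarith
        have h2 := mul_le_mul_of_nonneg_left this hγ.le
        linarith
      have k5 : (Real.sqrt 2 / Real.sqrt Real.pi) * e ≤ 1 := by
        have hsle1 : Real.sqrt 2 / Real.sqrt Real.pi ≤ 1 := by
          rw [div_le_one sqrtpi_pos]
          apply Real.sqrt_le_sqrt
          linarith [Real.pi_gt_three]
        calc (Real.sqrt 2 / Real.sqrt Real.pi) * e ≤ 1 * e :=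
              mul_le_mul_of_nonneg_right hsle1 he_pos.le
          _ ≤ 1 := by linarith
      rw [hcγ]
      have expand : (1/γ - γ) * ((2 / Real.sqrt Real.pi) * E)
          - (Real.sqrt 2 / Real.sqrt Real.pi) * e + γ
          = (1/γ) * ((2 / Real.sqrt Real.pi) * E)
            + (γ - γ * ((2 / Real.sqrt Real.pi) * E)) - (Real.sqrt 2 / Real.sqrt Real.pi) * e := by
        ring
      rw [expand]
      linarith
  constructor
  · exact ⟨1, fun γ hγ => abs_le.mpr ⟨(key γ hγ).2, (key γ hγ).1⟩⟩
  · exact fun γ hγ => (key γ hγ).1
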